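/- For all positive integers k and l, the identity z_{l+k} = z_k ∘ t_{l,k} ∘ z_l holds as maps on semistandard skew tableaux with entries ≤ l+k; that is, for every skew shape λ/μ and every weight a of length l+k, applying z_l, then t_{l,k}, then z_k to any A ∈ YT(λ/μ, a) gives z_{l+k}(A). -/

import Mathlib

/-!
Common setup: a (skew) semistandard Young tableau with entries `≤ m` is encoded by
its Gelfand–Tsetlin pattern `g : ℕ → ℕ → ℕ`, where `g i j = μ_i +` (number of entries
`≤ j` in row `i`); rows `i = 0, 1, 2, …` are counted from the top, entry values are
`1, …, m`, and columns are `j = 0, …, m` (column `0` is the inner shape `μ`,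
column `m` is the outer shape `λ`).  All maps in the paper are realized concretely
via Bender–Knuth transformations, following Propositions 1–3 of the paper.
-/

namespace YoungTableauBijections

/-- Gelfand–Tsetlin-type encoding of a skew semistandard Young tableau. -/
abbrev GT : Type := ℕ → ℕ → ℕ

/-- `p` is a partition: weakly decreasing, finitely many nonzero parts (0-indexed). -/
def IsPartition (p : ℕ → ℕ) : Prop :=
  (∀ i, p (i + 1) ≤ p i) ∧ ∃ N, ∀ i, N ≤ i → p i = 0

/-- The number of (nonzero) rows `ℓ(p)` of a partition. -/
noncomputable def numRows (p : ℕ → ℕ) : ℕ := sInf {N | ∀ i, N ≤ i → p i = 0}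

/-- The size `|p|` of a partition (or of a weight). -/
noncomputable def psize (p : ℕ → ℕ) : ℕ := ∑' i, p i

/-- `mu ⊆ lam` componentwise. -/
def subShape (mu lam : ℕ → ℕ) : Prop := ∀ i, mu i ≤ lam i

/-- `g` encodes a semistandard skew tableau with entries `≤ m` (weakly increasing
rows, strictly increasing columns, finitely many cells); columns beyond `m` are
required to be constant (no junk). -/
def IsSSYT (m : ℕ) (g : GT) : Prop :=
  (∀ i j, j < m → g i j ≤ g i (j + 1)) ∧
  (∀ i j, j < m → g (i + 1) (j + 1) ≤ g i j) ∧
  (∀ i, g (i + 1) 0 ≤ g i 0) ∧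
  (∃ N, ∀ i, N ≤ i → g i m = 0) ∧
  (∀ i j, m ≤ j → g i j = g i m)

/-- The number of entries equal to `j + 1` in row `i`
(the recording matrix, 0-indexed). -/
def rowCount (g : GT) (i j : ℕ) : ℕ := g i (j + 1) - g i j

/-- The weight: `wt g j` is the total number of entries equal to `j + 1`. -/
noncomputable def wt (g : GT) (j : ℕ) : ℕ := ∑' i, rowCount g i j

/-- `g ∈ YT(λ/μ, a)`: semistandard, of shape `λ/μ`, entries `≤ m`, and weight `a`
(where `a j` is the required number of entries equal to `j + 1`). -/
def MemYT (m : ℕ) (lam mu a : ℕ → ℕ) (g : GT) : Prop :=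
  IsSSYT m g ∧ (∀ i, g i 0 = mu i) ∧ (∀ i, g i m = lam i) ∧
  ∀ j, j < m → wt g j = a j

/-- The reversed weight `a* = (a_m, …, a_1)` (0-indexed). -/
def wrev (m : ℕ) (a : ℕ → ℕ) : ℕ → ℕ := fun j => a (m - 1 - j)

/-- The lattice-word (Littlewood–Richardson) condition: every initial segment of the
right-to-left, top-to-bottom reading word has at least as many entries `r` as
entries `r + 1`. -/
def IsLattice (m : ℕ) (g : GT) : Prop :=
  ∀ j i : ℕ, j + 1 < m →
    (∑ q ∈ Finset.range (i + 1), rowCount g q (j + 1)) ≤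
      ∑ q ∈ Finset.range i, rowCount g q j

/-- `g ∈ LR(λ/μ, ν)`. -/
def MemLR (m : ℕ) (lam mu nu : ℕ → ℕ) (g : GT) : Prop :=
  MemYT m lam mu nu g ∧ IsLattice m g

/-- The canonical tableau `Can(λ)`: row `i` is filled with entries `i + 1`. -/
def canGT (lam : ℕ → ℕ) : GT := fun i j => if i < j then lam i else 0

/-- The Bender–Knuth transformation `s_r` (`1 ≤ r ≤ m - 1`), acting on GT patterns:
it replaces `a_{i,r}` by
`min (a_{i,r+1}) (a_{i-1,r-1}) + max (a_{i,r-1}) (a_{i+1,r+1}) - a_{i,r}`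
(with the top-row convention that the `min` term is `a_{i,r+1}` for the first row). -/
def bk (r : ℕ) (g : GT) : GT := fun i j =>
  if j = r then
    (if i = 0 then g i (r + 1) else min (g i (r + 1)) (g (i - 1) (r - 1))) +
      max (g i (r - 1)) (g (i + 1) (r + 1)) - g i r
  else g i j

/-- Apply a word in the Bender–Knuth generators; the rightmost letter acts first. -/
def applyWord : List ℕ → GT → GT
  | [], g => g
  | r :: w, g => bk r (applyWord w g)

/-- The block `(s_b s_{b-1} ⋯ s_1)`. -/
def descBlock (b : ℕ) : List ℕ := (List.range b).map fun i => b - i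

/-- `z_m = (s_1)(s_2 s_1)(s_3 s_2 s_1) ⋯ (s_{m-1} ⋯ s_2 s_1)` as a word. -/
def zWord (m : ℕ) : List ℕ := ((List.range (m - 1)).map fun q => descBlock (q + 1)).flatten

/-- The block `(s_j s_{j+1} ⋯ s_{j+r-1})`. -/
def ascBlock (j r : ℕ) : List ℕ := (List.range r).map fun i => j + i

/-- `t_{r,l} = (s_l s_{l+1} ⋯ s_{l+r-1}) ⋯ (s_2 s_3 ⋯ s_{r+1})(s_1 s_2 ⋯ s_r)`
as a word (here `m = r + l`). -/
def tWord (r l : ℕ) : List ℕ := ((List.range l).map fun q => ascBlock (l - q) r).flatten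

/-- The map `z_m`. -/
def zmapGT (m : ℕ) : GT → GT := applyWord (zWord m)

/-- The map `t_{r,l}`. -/
def tmapGT (r l : ℕ) : GT → GT := applyWord (tWord r l)

/-- Cut all columns beyond column `m` (normalize to entries `≤ m`). -/
def restrictGT (m : ℕ) (g : GT) : GT := fun i j => g i (min j m)

/-- The Schützenberger involution `ξ` on (skew) tableaux with entries `≤ m`,
computed by the Bender–Knuth word `z_m` (Proposition 1 of the paper). -/
def schutz (m : ℕ) (g : GT) : GT := restrictGT m (zmapGT m g)

/-- `glue r B A` encodes `B ⋆ Ã`: the union of `B` (entries `≤ r`) with `A`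
relabelled to have entries `r + 1, r + 2, …`. -/
def glue (r : ℕ) (B A : GT) : GT := fun i j => if j ≤ r then B i j else A i (j - r)

/-- Shift columns left by `s` (relabel entries by subtracting `s`). -/
def shiftCols (s : ℕ) (g : GT) : GT := fun i j => g i (j + s)

/-- Tableau switching `ζ(B, A) = (A′, B′)`, where `B` has entries `≤ r` and `A` has
entries `≤ l`: glue, apply `t_{r,l}`, and split again (Proposition 2 of the paper). -/
def switch (r l : ℕ) (B A : GT) : GT × GT :=
  (restrictGT l (tmapGT r l (glue r B A)),
    restrictGT r (shiftCols l (tmapGT r l (glue r B A))))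

/-- Jeu de taquin rectification `ψ` of a skew tableau with entries `≤ l`:
switch it past the canonical tableau of its inner shape. -/
noncomputable def rect (l : ℕ) (A : GT) : GT :=
  (switch (numRows fun i => A i 0) l (canGT fun i => A i 0) A).1

/-- `V ∈ Mat(a, b)`: a `k × k` nonnegative integer matrix (0-indexed) with row
sums `a` and column sums `b`. -/
def MemMat (k : ℕ) (a b : ℕ → ℕ) (V : ℕ → ℕ → ℕ) : Prop :=
  (∀ i, i < k → ∑ j ∈ Finset.range k, V i j = a i) ∧
  (∀ j, j < k → ∑ i ∈ Finset.range k, V i j = b j)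

/-- The skew tableau `Y ∈ YT(π/σ, b)` of Proposition 3: row `(k+1) - i` (1-indexed)
contains exactly `v_{i,j}` entries equal to `j`. -/
def rskY (k : ℕ) (V : ℕ → ℕ → ℕ) : GT := fun p j =>
  if p < k then
    (∑ q ∈ Finset.range (k - p - 1), ∑ s ∈ Finset.range k, V q s) +
      ∑ q ∈ Finset.range (min j k), V (k - p - 1) q
  else 0

/-- The companion skew tableau `X` of Proposition 3 (built from the transpose). -/
def rskX (k : ℕ) (V : ℕ → ℕ → ℕ) : GT := rskY k fun i j => V j i

/-- The RSK correspondence `φ(V) = (B, A)` (insertion tableau, recording tableau),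
realized via jeu de taquin as in Proposition 3 of the paper. -/
noncomputable def rsk (k : ℕ) (V : ℕ → ℕ → ℕ) : GT × GT :=
  (rect k (rskY k V), rect k (rskX k V))

/-- The rotated complemented tableau `A^•` of a straight-shape tableau `A` with
entries `≤ k` and at most `l` rows: `A^• i j = λ_1 - A (l-1-i) (k-j)`. -/
def rotGT (k l : ℕ) (A : GT) : GT := fun i j =>
  if i < l then A 0 k - A (l - 1 - i) (k - min j k) else 0

/-- `composeGT q s Ytop Xbot` encodes the composition: `Ytop` occupies the top `q`
rows, shifted `s` columns to the right, sitting above and to the right of `Xbot`. -/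
def composeGT (q s : ℕ) (Ytop Xbot : GT) : GT := fun i j =>
  if i < q then s + Ytop i j else Xbot (i - q) j

/-- `B ∈ CF(μ, ν, λ)`: `B ∈ YT(μ, λ - ν)` and `B ∘ Can(ν) ∈ LR(μ ∘ ν, λ)`
(all entries `≤ l`, where `l = ℓ(λ)`). -/
def MemCF (l : ℕ) (mu nu lam : ℕ → ℕ) (B : GT) : Prop :=
  MemYT l mu (fun _ => 0) (fun j => lam j - nu j) B ∧
  MemLR l (fun i => if i < l then mu 0 + nu i else mu (i - l))
    (fun i => if i < l then mu 0 else 0) lam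
    (composeGT l (mu 0) (canGT nu) B)

/-- `B ∈ CF*(μ, ν, λ)`: `B ∈ YT(μ, (λ - ν)*)` and `B^• ∘ Can(ν) ∈ LR(μ^• ∘ ν, λ)`. -/
def MemCFstar (l : ℕ) (mu nu lam : ℕ → ℕ) (B : GT) : Prop :=
  MemYT l mu (fun _ => 0) (wrev l fun j => lam j - nu j) B ∧
  MemLR l
    (fun i => if i < l then mu 0 + nu i
      else if i - l < numRows mu then mu 0 else 0)
    (fun i => if i < l then mu 0
      else if i - l < numRows mu then mu 0 - mu (numRows mu - 1 - (i - l)) else 0)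
    lam
    (composeGT l (mu 0) (canGT nu) (rotGT l (numRows mu) B))

/-- The extended recording matrix of `A` (1-indexed), with the conventions
`c_{0,q} = 0`, `c_{i,0} = μ_i`. -/
def cext (A : GT) (i q : ℕ) : ℕ :=
  if i = 0 then 0 else if q = 0 then A (i - 1) 0 else rowCount A (i - 1) (q - 1)

/-- The recording matrix `D = (d_{i,j})` of `γ(A)` (1-indexed):
`d_{i,j} = Σ_{q=0}^{l-j} c_{l-j+i,q} - Σ_{q=0}^{l-j+1} c_{l-j+1+i,q}`. -/
def dmat (l : ℕ) (A : GT) (i j : ℕ) : ℕ :=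
  (∑ q ∈ Finset.range (l - j + 1), cext A (l - j + i) q) -
    ∑ q ∈ Finset.range (l - j + 2), cext A (l - j + 1 + i) q

/-- The map `γ`, on GT patterns (its output is the straight-shape tableau of shape
`μ` whose recording matrix is `D`). -/
def gammaMap (l : ℕ) (A : GT) : GT := fun i j =>
  ∑ q ∈ Finset.Icc 1 (min j l), dmat l A (i + 1) q

/-- The companion map `τ`: `τ(A)` is the straight-shape tableau whose recording
matrix is `e_{i,j} = c_{j,i}`. -/
def tauMap (l : ℕ) (A : GT) : GT := fun i j =>
  ∑ q ∈ Finset.range (min j l), rowCount A q i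

/-- The reversal map `χ = ζ ∘ ξ ∘ ζ`:
`χ(A) = A″` where `(A′, C′) = ζ(Can(μ), A)` and `(C″, A″) = ζ(ξ^N(A′), C′)`. -/
def chiMap (r l : ℕ) (mu : ℕ → ℕ) (A : GT) : GT :=
  (switch l r (schutz l (switch r l (canGT mu) A).1) ((switch r l (canGT mu) A).2)).2

/-- The octahedral map `ς(A, B) = (B′, D)` defined by three tableau switchings. -/
noncomputable def octa (k1 k2 k3 : ℕ) (lam : ℕ → ℕ) (A B : GT) : GT × GT :=
  let C1 := (switch k1 k2 (canGT lam) A).2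
  let P := switch k1 k3 C1 B
  let pi := fun i => P.1 i k3
  (P.1, (switch (numRows pi) k1 (canGT pi) P.2).2)

/-! ### Auxiliary lemmas for Statement 4 -/

lemma applyWord_append (w₁ w₂ : List ℕ) (g : GT) :
    applyWord (w₁ ++ w₂) g = applyWord w₁ (applyWord w₂ g) := by
  induction w₁ with
  | nil => rfl
  | cons a w ih => simp [applyWord, ih]

lemma bk_apply_ne (r : ℕ) (g : GT) (i j : ℕ) (h : j ≠ r) : bk r g i j = g i j := by
  simp [bk, h]

/-- Far-apart Bender–Knuth transformations commute. -/
lemma bk_comm (r s : ℕ) (h : r + 2 ≤ s) (g : GT) : bk r (bk s g) = bk s (bk r g) := by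
  funext i j
  by_cases hr : j = r
  · subst hr
    have h1 : ¬(j + 1 = s) := by omega
    have h2 : ¬(j - 1 = s) := by omega
    have h3 : ¬(j = s) := by omega
    simp [bk, h1, h2, h3]
  · by_cases hs : j = s
    · subst hs
      have h1 : ¬(j + 1 = r) := by omega
      have h2 : ¬(j - 1 = r) := by omega
      simp [bk, h1, h2, hr]
    · rw [bk_apply_ne r _ i j hr, bk_apply_ne s _ i j hs,
        bk_apply_ne s _ i j hs, bk_apply_ne r _ i j hr]

lemma bk_comm' (r s : ℕ) (h : r + 2 ≤ s ∨ s + 2 ≤ r) (g : GT) :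
    bk r (bk s g) = bk s (bk r g) := by
  rcases h with h | h
  · exact bk_comm r s h g
  · exact (bk_comm s r h g).symm

lemma applyWord_bk (r : ℕ) (w : List ℕ) (h : ∀ x ∈ w, x + 2 ≤ r ∨ r + 2 ≤ x) (g : GT) :
    applyWord w (bk r g) = bk r (applyWord w g) := by
  induction w with
  | nil => rfl
  | cons a w ih =>
    simp only [applyWord]
    rw [ih (fun x hx => h x (List.mem_cons_of_mem a hx)),
      bk_comm' a r (by rcases h a (List.mem_cons_self) with h' | h' <;> omega)]

/-- Words whose letters are pairwise far apart commute. -/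
lemma applyWord_swap (u v : List ℕ) (h : ∀ x ∈ u, ∀ y ∈ v, x + 2 ≤ y ∨ y + 2 ≤ x)
    (g : GT) : applyWord (u ++ v) g = applyWord (v ++ u) g := by
  induction u with
  | nil => simp
  | cons a u ih =>
    have h1 : applyWord (v ++ a :: u) g = applyWord v (bk a (applyWord u g)) := by
      rw [applyWord_append]; rfl
    rw [h1, applyWord_bk a v (fun y hy => (h a (List.mem_cons_self) y hy).symm)]
    show bk a (applyWord (u ++ v) g) = bk a (applyWord v (applyWord u g))
    rw [ih (fun x hx => h x (List.mem_cons_of_mem a hx)), applyWord_append]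

lemma mem_descBlock {x b : ℕ} (h : x ∈ descBlock b) : 1 ≤ x ∧ x ≤ b := by
  simp only [descBlock, List.mem_map, List.mem_range] at h
  obtain ⟨i, hi, rfl⟩ := h
  omega

lemma mem_ascBlock {x j r : ℕ} (h : x ∈ ascBlock j r) : j ≤ x ∧ x < j + r := by
  simp only [ascBlock, List.mem_map, List.mem_range] at h
  obtain ⟨i, hi, rfl⟩ := h
  omega

lemma mem_zWord {x m : ℕ} (h : x ∈ zWord m) : 1 ≤ x ∧ x + 1 ≤ m := by
  simp only [zWord, List.mem_flatten, List.mem_map, List.mem_range] at h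
  obtain ⟨_, ⟨q, hq, rfl⟩, hx⟩ := h
  have := mem_descBlock hx
  omega

lemma mem_tWord {x r l : ℕ} (h : x ∈ tWord r l) : 1 ≤ x ∧ x < l + r := by
  simp only [tWord, List.mem_flatten, List.mem_map, List.mem_range] at h
  obtain ⟨_, ⟨q, hq, rfl⟩, hx⟩ := h
  have := mem_ascBlock hx
  omega

lemma descBlock_succ (b : ℕ) : descBlock (b + 1) = (b + 1) :: descBlock b := by
  simp only [descBlock, List.range_succ_eq_map, List.map_cons, List.map_map, Nat.sub_zero]
  refine congrArg _ (List.map_congr_left fun i _ => ?_)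
  simp only [Function.comp_apply]
  omega

lemma zWord_succ (m : ℕ) : zWord (m + 1) = zWord m ++ descBlock m := by
  cases m with
  | zero => rfl
  | succ n =>
    show ((List.range (n + 1)).map fun q => descBlock (q + 1)).flatten = _
    rw [List.range_succ, List.map_append, List.flatten_append]
    simp [zWord]

lemma ascBlock_succ (j r : ℕ) : ascBlock j (r + 1) = ascBlock j r ++ [j + r] := by
  simp [ascBlock, List.range_succ]

lemma ascBlock_zero (j : ℕ) : ascBlock j 0 = [] := rfl

lemma tWord_zero_left (l : ℕ) : tWord 0 l = [] := by
  simp [tWord, ascBlock]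

lemma tWord_succ (r l : ℕ) : tWord r (l + 1) = ascBlock (l + 1) r ++ tWord r l := by
  simp only [tWord, List.range_succ_eq_map, List.map_cons, List.map_map, List.flatten_cons,
    Nat.sub_zero]
  refine congrArg _ (congrArg _ (List.map_congr_left fun q _ => ?_))
  simp only [Function.comp_apply]
  congr 1
  omega

lemma descBlock_add (k r : ℕ) :
    (descBlock k).map (· + r) ++ descBlock r = descBlock (k + r) := by
  induction k with
  | zero => simp [descBlock]
  | succ n ih =>
    rw [descBlock_succ, List.map_cons, List.cons_append, ih,
      show n + 1 + r = (n + r) + 1 by omega, descBlock_succ]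

lemma tWord_step (r : ℕ) : ∀ (l : ℕ) (g : GT),
    applyWord (tWord (r + 1) l) g
      = applyWord (tWord r l ++ (descBlock l).map (· + r)) g := by
  intro l
  induction l with
  | zero => intro g; rfl
  | succ n ih =>
    intro g
    have hcond : ∀ x ∈ tWord r n, x + 2 ≤ n + 1 + r ∨ n + 1 + r + 2 ≤ x := by
      intro x hx
      have := mem_tWord hx
      omega
    simp only [tWord_succ, ascBlock_succ, descBlock_succ, List.map_cons, applyWord_append,
      ih, applyWord]
    rw [applyWord_bk _ _ hcond]

lemma z_t_z_words (k : ℕ) : ∀ (r : ℕ) (g : GT),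
    applyWord (zWord k ++ (tWord r k ++ zWord r)) g = applyWord (zWord (k + r)) g := by
  intro r
  induction r with
  | zero => intro g; simp [tWord_zero_left, zWord, applyWord]
  | succ n ih =>
    intro g
    have hswap : ∀ X : GT,
        applyWord ((descBlock k).map (· + n)) (applyWord (zWord n) X)
          = applyWord (zWord n) (applyWord ((descBlock k).map (· + n)) X) := by
      intro X
      have hc : ∀ x ∈ (descBlock k).map (· + n), ∀ y ∈ zWord n,
          x + 2 ≤ y ∨ y + 2 ≤ x := by
        intro x hx y hy
        have hy' := mem_zWord hy
        simp only [List.mem_map] at hx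
        obtain ⟨z, hz, rfl⟩ := hx
        have := mem_descBlock hz
        omega
      have h0 := applyWord_swap _ _ hc X
      rw [applyWord_append, applyWord_append] at h0
      exact h0
    have hrw : k + (n + 1) = (k + n) + 1 := rfl
    rw [hrw]
    simp only [applyWord_append, zWord_succ n, tWord_step n k]
    rw [hswap (applyWord (descBlock n) g)]
    have hih := ih (applyWord ((descBlock k).map (· + n)) (applyWord (descBlock n) g))
    rw [applyWord_append, applyWord_append] at hih
    rw [hih, ← applyWord_append, ← applyWord_append, List.append_assoc,
      descBlock_add k n, ← zWord_succ (k + n)]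

/-- relation `(⊛)`.
For all positive integers `k` and `l`, `z_{l+k} = z_k ∘ t_{l,k} ∘ z_l` as maps on
semistandard skew tableaux with entries `≤ l + k`: for every skew shape `λ/μ` and
weight `a` of length `l + k`, applying `z_l`, then `t_{l,k}`, then `z_k` to any
`A ∈ YT(λ/μ, a)` gives `z_{l+k}(A)`. -/
theorem z_t_z_relation
    (k l : ℕ) (hk : 1 ≤ k) (hl : 1 ≤ l)
    (lam mu a : ℕ → ℕ)
    (hlam : IsPartition lam) (hmu : IsPartition mu) (hsub : subShape mu lam)
    (A : GT) (hA : MemYT (l + k) lam mu a A) :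
    zmapGT k (tmapGT l k (zmapGT l A)) = zmapGT (l + k) A := by
  have := z_t_z_words k l A
  rw [applyWord_append, applyWord_append] at this
  simpa [zmapGT, tmapGT, Nat.add_comm k l] using this

end YoungTableauBijections
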